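/- arXiv:1003.1215 — 2 statements merged into one kernel-verified Lean document; each statement's English description precedes it below -/
import Mathlib

section
/- Let p > 1 be real and λ ∈ ℂ with λ ≠ 0. The order of vanishing of s ↦ det(Id − λ p^{−s}) = 1 − λ p^{−s} at s = 0 equals 1 if λ = 1 and equals 0 otherwise. Consequently, for a finite-dimensional complex vector space V with an automorphism φ, the order of vanishing at s = 0 of s ↦ det(Id − φ p^{−s} | V) equals the algebraic multiplicity of the eigenvalue 1 of φ, i.e., dim ker((Id − φ)^w) for w ≥ dim V. -/
open Polynomial Complex

private lemma aux_eval_analyticAt {f : ℂ → ℂ} {x : ℂ} (P : ℂ[X]) (hf : AnalyticAt ℂ f x) :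
    AnalyticAt ℂ (fun s => P.eval (f s)) x := by
  induction P using Polynomial.induction_on' with
  | add p q hp hq => simpa [eval_add] using hp.fun_add hq
  | monomial n a => simpa [eval_monomial] using analyticAt_const.fun_mul (hf.fun_pow n)

private lemma aux_order (p : ℝ) (hp : 1 < p) (P : ℂ[X]) (hP : P ≠ 0)
    {f : ℂ → ℂ} (hf : AnalyticAt ℂ f 0)
    (hfeq : ∀ s, f s = P.eval ((p : ℂ) ^ (-s))) :
    analyticOrderAt f 0 = (P.rootMultiplicity 1 : ℕ∞) := by
  have hp0 : (p : ℂ) ≠ 0 := by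
    simp only [ne_eq, ofReal_eq_zero]; linarith
  set h : ℂ → ℂ := fun s => (p : ℂ) ^ (-s) with hh_def
  have hhexp : h = fun s => Complex.exp (Complex.log p * (-s)) := by
    funext s; simp [hh_def, cpow_def_of_ne_zero hp0]
  have hh : AnalyticAt ℂ h 0 := by
    rw [hhexp]; exact (analyticAt_const.mul analyticAt_id.neg).cexp
  have h0 : h 0 = 1 := by simp [hh_def]
  have hne : ∀ s, h s ≠ 0 := by
    intro s; rw [hhexp]; exact Complex.exp_ne_zero _
  set u : ℂ → ℂ := dslope h 0 with hu_def
  have hu : AnalyticAt ℂ u 0 := by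
    obtain ⟨q, hq⟩ := hh
    exact ⟨_, hq.has_fpower_series_dslope_fslope⟩
  have hkey : ∀ s, h s - 1 = s • u s := by
    intro s
    have := sub_smul_dslope h 0 s
    simpa [h0] using this.symm
  have hlog : Complex.log p ≠ 0 := by
    rw [← Complex.ofReal_log (by linarith : (0:ℝ) ≤ p)]
    simp only [ne_eq, ofReal_eq_zero]
    nlinarith [Real.log_pos hp]
  have hu0 : u 0 ≠ 0 := by
    have hd : HasDerivAt h (-(Complex.log p)) 0 := by
      have h1 : HasDerivAt (fun s : ℂ => Complex.log p * (-s)) (Complex.log p * (-1)) 0 :=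
        ((hasDerivAt_id (0:ℂ)).neg).const_mul _
      have h2 := (Complex.hasDerivAt_exp (Complex.log p * (-0))).comp 0 h1
      rw [hhexp]
      simpa [Function.comp_def] using h2
    rw [hu_def, dslope_same, hd.deriv]
    simpa using hlog
  set m := P.rootMultiplicity 1 with hm
  set r := P /ₘ (X - C 1) ^ m with hr
  have heq : (X - C 1) ^ m * r = P := pow_mul_divByMonic_rootMultiplicity_eq P 1
  have hr1 : r.eval 1 ≠ 0 := eval_divByMonic_pow_rootMultiplicity_ne_zero 1 hP
  set g : ℂ → ℂ := fun s => u s ^ m * r.eval (h s) with hg_def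
  have hg : AnalyticAt ℂ g 0 := (hu.pow m).mul (aux_eval_analyticAt r hh)
  have hg0 : g 0 ≠ 0 := by
    simp only [hg_def, h0]
    exact mul_ne_zero (pow_ne_zero _ hu0) hr1
  have feq : ∀ s, f s = s ^ m • g s := by
    intro s
    rw [hfeq s]
    have : P.eval (h s) = (h s - 1) ^ m * r.eval (h s) := by
      conv_lhs => rw [← heq]
      simp [eval_pow]
    rw [show (p:ℂ) ^ (-s) = h s from rfl, this, hkey s]
    simp only [smul_eq_mul, hg_def]
    ring
  rw [hf.analyticOrderAt_eq_natCast]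
  exact ⟨g, hg, hg0, Filter.Eventually.of_forall fun s => by simpa using feq s⟩

private lemma aux_reverse_X_sub_C_one : reverse ((X : ℂ[X]) - C 1) = 1 - X := by
  have h : (X : ℂ[X]) - C 1 = C (-1) + X := by simp [map_neg]; ring
  rw [h, reverse_C_add]
  have : reverse (X : ℂ[X]) = 1 := by rw [reverse, natDegree_X, reflect_one_X]
  rw [this]
  simp [map_neg]; ring

private lemma aux_rev (q : ℂ[X]) (hq : q ≠ 0) :
    q.reverse.rootMultiplicity 1 = q.rootMultiplicity 1 := by
  set m := q.rootMultiplicity 1 with hm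
  set r := q /ₘ (X - C 1) ^ m with hr
  have heq : (X - C 1) ^ m * r = q := pow_mul_divByMonic_rootMultiplicity_eq q 1
  have hr1 : r.eval 1 ≠ 0 := eval_divByMonic_pow_rootMultiplicity_ne_zero 1 hq
  have hrevr1 : (reverse r).eval 1 = r.eval 1 := by
    have := @eval₂_reverse_mul_pow ℂ _ ℂ _ (RingHom.id ℂ) 1 invertibleOne r
    simpa [eval₂_at_one] using this
  have hqrev : q.reverse = (X - C 1) ^ m * (C (-1 : ℂ) ^ m * reverse r) := by
    conv_lhs => rw [← heq]
    rw [reverse_mul_of_domain]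
    have hpow : reverse (((X : ℂ[X]) - C 1) ^ m) = (1 - X) ^ m := by
      induction m with
      | zero => simp [reverse, reflect_one]
      | succ k ih => rw [pow_succ, reverse_mul_of_domain, ih, aux_reverse_X_sub_C_one, pow_succ]
    rw [hpow]
    have h2 : ((1 : ℂ[X]) - X) ^ m = (X - C 1) ^ m * C (-1 : ℂ) ^ m := by
      rw [← mul_pow]; congr 1; simp [map_neg]
    rw [h2]; ring
  have hne : ((X : ℂ[X]) - C 1) ^ m * (C (-1 : ℂ) ^ m * reverse r) ≠ 0 := by
    rw [← hqrev, ne_eq, reverse_eq_zero]; exact hq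
  have hne2 : (C (-1 : ℂ) ^ m * reverse r) ≠ 0 := fun h => hne (by rw [h, mul_zero])
  rw [hqrev, rootMultiplicity_mul hne, rootMultiplicity_mul hne2,
    rootMultiplicity_X_sub_C_pow, ← map_pow, rootMultiplicity_C,
    rootMultiplicity_eq_zero (by simpa [IsRoot, hrevr1] using hr1)]
  simp

private lemma aux_eval_charpolyRev {n : Type*} [Fintype n] [DecidableEq n]
    (A : Matrix n n ℂ) (t : ℂ) :
    (Matrix.charpolyRev A).eval t = Matrix.det (1 - t • A) := by
  rw [Matrix.charpolyRev, ← coe_evalRingHom, RingHom.map_det]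
  congr 1
  ext i j
  simp only [RingHom.mapMatrix_apply, Matrix.map_apply, Matrix.sub_apply, Matrix.smul_apply,
    smul_eq_mul, map_sub, map_mul, eval_X, eval_C, coe_evalRingHom]
  by_cases hij : i = j
  · subst hij
    simp only [Matrix.one_apply_eq, eval_one, eval_mul, eval_X, eval_C, mul_comm]
  · simp only [Matrix.one_apply_ne hij, eval_zero, eval_mul, eval_X, eval_C, mul_comm]

private lemma aux_charpoly_sub_one {n : Type*} [Fintype n] [DecidableEq n] (A : Matrix n n ℂ) :
    (A - 1).charpoly = A.charpoly.comp (X + C 1) := by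
  rw [Matrix.charpoly, Matrix.charpoly, comp, ← coe_eval₂RingHom, RingHom.map_det]
  congr 1
  ext i j
  by_cases hij : i = j
  · subst hij
    simp [Matrix.charmatrix_apply_eq, Matrix.map_apply, Matrix.sub_apply, map_sub]
    ring
  · simp [Matrix.charmatrix_apply_ne _ _ _ hij, Matrix.map_apply, Matrix.sub_apply,
      Matrix.one_apply_ne hij]

private lemma aux_sideB (V : Type*) [AddCommGroup V] [Module ℂ V] [FiniteDimensional ℂ V]
    (φ : V ≃ₗ[ℂ] V) (w : ℕ) (hw : Module.finrank ℂ V ≤ w) :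
    Module.finrank ℂ (LinearMap.ker (((1 : V →ₗ[ℂ] V) - φ.toLinearMap) ^ w))
      = ((LinearMap.toMatrix (Module.finBasis ℂ V) (Module.finBasis ℂ V)
          φ.toLinearMap).charpoly.rootMultiplicity 1) := by
  set b := Module.finBasis ℂ V
  set A := LinearMap.toMatrix b b φ.toLinearMap with hA
  set ψ : Module.End ℂ V := φ.toLinearMap - 1 with hψ
  have h1 : (1 : V →ₗ[ℂ] V) - φ.toLinearMap = (-1 : ℂ) • ψ := by
    rw [hψ]; simp
  have hker : LinearMap.ker (((1 : V →ₗ[ℂ] V) - φ.toLinearMap) ^ w)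
      = LinearMap.ker (ψ ^ w) := by
    rw [h1, _root_.smul_pow, LinearMap.ker_smul]
    exact pow_ne_zero _ (by norm_num)
  have hker2 : LinearMap.ker (ψ ^ w) = LinearMap.ker (ψ ^ Module.finrank ℂ V) :=
    Module.End.ker_pow_eq_ker_pow_finrank_of_le hw
  have hgen : ψ.maxGenEigenspace 0 = LinearMap.ker (ψ ^ Module.finrank ℂ V) := by
    rw [Module.End.maxGenEigenspace_eq_genEigenspace_finrank, Module.End.genEigenspace_nat]
    simp
  have hcp : LinearMap.charpoly ψ = (A - 1).charpoly := by
    rw [← LinearMap.charpoly_toMatrix ψ b, hψ, map_sub, LinearMap.toMatrix_one]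
  rw [hker, hker2, ← hgen, LinearMap.finrank_maxGenEigenspace_zero_eq ψ, hcp,
    aux_charpoly_sub_one, rootMultiplicity_eq_natTrailingDegree]

/-- For `λ ≠ 0`, the order of vanishing of `s ↦ 1 − λ p^{−s}` at `s = 0` is `1` if `λ = 1`
and `0` otherwise; consequently the order of vanishing at `s = 0` of
`s ↦ det(Id − φ p^{−s} | V)` equals the algebraic multiplicity `dim ker((Id − φ)^w)`
(for any `w ≥ dim V`) of the eigenvalue `1` of the automorphism `φ`. -/
theorem stmt_3 (p : ℝ) (hp : 1 < p) (lam : ℂ) (hlam : lam ≠ 0)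
    (h1 : AnalyticAt ℂ (fun s : ℂ => 1 - lam * (p : ℂ) ^ (-s)) 0)
    (V : Type*) [AddCommGroup V] [Module ℂ V] [FiniteDimensional ℂ V]
    (φ : V ≃ₗ[ℂ] V)
    (h2 : AnalyticAt ℂ (fun s : ℂ =>
      LinearMap.det ((LinearMap.id : V →ₗ[ℂ] V) - (p : ℂ) ^ (-s) • φ.toLinearMap)) 0) :
    analyticOrderAt (fun s : ℂ => 1 - lam * (p : ℂ) ^ (-s)) 0 = (if lam = 1 then 1 else 0) ∧
    ∀ w : ℕ, Module.finrank ℂ V ≤ w →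
      analyticOrderAt (fun s : ℂ =>
        LinearMap.det ((LinearMap.id : V →ₗ[ℂ] V) - (p : ℂ) ^ (-s) • φ.toLinearMap)) 0 = (Module.finrank ℂ
        (LinearMap.ker (((1 : V →ₗ[ℂ] V) - φ.toLinearMap) ^ w)) : ℕ∞) := by
  constructor
  · set P : ℂ[X] := C 1 - C lam * X with hPdef
    have hP : P ≠ 0 := fun h => by simpa [hPdef] using congrArg (eval 0) h
    have h1' := aux_order p hp P hP h1 (fun s => by simp [hPdef])
    rw [h1']
    by_cases hl : lam = 1
    · subst hl
      have hfact : P = (X - C 1) * C (-1 : ℂ) := by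
        rw [hPdef]; simp only [map_one, one_mul, map_neg]; ring
      rw [if_pos rfl, hfact, rootMultiplicity_mul (by rw [← hfact]; exact hP),
        rootMultiplicity_X_sub_C_self, rootMultiplicity_C]
      rfl
    · rw [if_neg hl, rootMultiplicity_eq_zero (by
        simp only [IsRoot, hPdef, eval_sub, eval_one, eval_mul, eval_C, eval_X, mul_one]
        rw [sub_eq_zero]
        exact fun h => hl ((congrArg id h).symm))]
      rfl
  · intro w hw
    set b := Module.finBasis ℂ V
    set A := LinearMap.toMatrix b b φ.toLinearMap with hA
    have hP2 : Matrix.charpolyRev A ≠ 0 := fun h => by simpa using congrArg (eval 0) h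
    have hfe : ∀ s : ℂ, LinearMap.det ((LinearMap.id : V →ₗ[ℂ] V)
          - (p : ℂ) ^ (-s) • φ.toLinearMap)
        = (Matrix.charpolyRev A).eval ((p : ℂ) ^ (-s)) := by
      intro s
      rw [aux_eval_charpolyRev, ← LinearMap.det_toMatrix b, map_sub, map_smul,
        LinearMap.toMatrix_id]
    have h2' := aux_order p hp _ hP2 h2 (fun s => hfe s)
    rw [h2', aux_sideB V φ w hw]
    have : Matrix.charpolyRev A = (Matrix.charpoly A).reverse :=
      (Matrix.reverse_charpoly A).symm
    rw [this, aux_rev _ (Matrix.charpoly_monic A).ne_zero]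
end

section
/- Let W = V^{⊕f} where V is a finite-dimensional ℂ-vector space with automorphism φ, and let ψ : W → W be given by ψ(v_1, ..., v_f) = (φ(v_f), v_1, ..., v_{f−1}). Then for every t ∈ ℂ: det(Id_W − t·ψ) = det(Id_V − t^f · φ). -/
/-- The cyclic "induced" endomorphism `ψ` of `W = V^{⊕f}`:
`ψ(v₁, ..., v_f) = (φ(v_f), v₁, ..., v_{f−1})`. -/
noncomputable def cyclicShift (f : ℕ) (hf : 0 < f) {V : Type*} [AddCommGroup V]
    [Module ℂ V] (φ : V →ₗ[ℂ] V) : (Fin f → V) →ₗ[ℂ] (Fin f → V) :=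
  LinearMap.pi fun i =>
    if i.val = 0 then φ ∘ₗ LinearMap.proj (⟨f - 1, by omega⟩ : Fin f)
    else LinearMap.proj (⟨i.val - 1, by omega⟩ : Fin f)

open Matrix Finset

/-- The block-cyclic matrix `1 - t • Ψ`. -/
noncomputable def Emat (f n : ℕ) (t : ℂ) (A : Matrix (Fin n) (Fin n) ℂ) :
    Matrix (Fin f × Fin n) (Fin f × Fin n) ℂ := fun p q =>
  (if p = q then 1 else 0) -
    t * (if p.1.val = 0 then (if q.1.val = f - 1 then A p.2 q.2 else 0)
         else (if q.1.val = p.1.val - 1 ∧ q.2 = p.2 then 1 else 0))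

noncomputable def Lmat (f n : ℕ) (t : ℂ) :
    Matrix (Fin f × Fin n) (Fin f × Fin n) ℂ := fun p q =>
  (if p = q then 1 else 0) - (if p.1.val = q.1.val + 1 ∧ p.2 = q.2 then t else 0)

noncomputable def Mmat (f n : ℕ) (t : ℂ) (A : Matrix (Fin n) (Fin n) ℂ) :
    Matrix (Fin f × Fin n) (Fin f × Fin n) ℂ := fun p q =>
  (if p = q then 1 else 0) -
    (if q.1.val = f - 1 then t ^ (p.1.val + 1) * A p.2 q.2 else 0)

theorem L_mul_M (f n : ℕ) (t : ℂ) (A : Matrix (Fin n) (Fin n) ℂ) :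
    Lmat f n t * Mmat f n t A = Emat f n t A := by
  ext ⟨i, a⟩ ⟨j, c⟩
  rw [Matrix.mul_apply]
  simp only [Lmat, sub_mul, ite_mul, one_mul, zero_mul, Finset.sum_sub_distrib]
  rw [Finset.sum_ite_eq _ (⟨i, a⟩ : Fin f × Fin n) (fun k => Mmat f n t A k (j, c))]
  simp only [Finset.mem_univ, if_true]
  have hj := j.isLt
  have hi := i.isLt
  rcases Nat.eq_zero_or_pos i.val with h0 | h0
  · rw [Finset.sum_eq_zero (fun k _ => by rw [if_neg]; rintro ⟨hk, -⟩; omega)]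
    simp only [Mmat, Emat, Prod.mk.injEq, Fin.ext_iff, h0, if_true, sub_zero]
    split_ifs <;> (try (exfalso; omega)) <;> ring
  · rw [Finset.sum_eq_single (⟨⟨i.val - 1, by omega⟩, a⟩ : Fin f × Fin n)
      (fun k _ hk => by
        rw [if_neg]
        rintro ⟨h1, h2⟩
        exact hk (by
          obtain ⟨k1, k2⟩ := k
          simp only [Prod.mk.injEq, Fin.ext_iff] at h1 h2 ⊢
          omega))
      (fun h => absurd (Finset.mem_univ _) h)]
    simp only [Mmat, Emat, Prod.mk.injEq, Fin.ext_iff]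
    have h1 : i.val - 1 + 1 = i.val := by omega
    simp only [h1, eq_self_iff_true, and_self, if_true]
    split_ifs <;> (try (exfalso; omega)) <;> ring

theorem det_Lmat (f n : ℕ) (t : ℂ) : (Lmat f n t).det = 1 := by
  rw [← Matrix.det_transpose]
  have hbt : ((Lmat f n t)ᵀ).BlockTriangular (fun p => p.1.val) := by
    intro p q hlt
    have hlt' : q.1.val < p.1.val := hlt
    show Lmat f n t q p = 0
    simp only [Lmat]
    rw [if_neg (by rintro rfl; exact lt_irrefl _ hlt'), if_neg (by rintro ⟨h, -⟩; omega)]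
    ring
  rw [hbt.det]
  apply Finset.prod_eq_one
  intro k _
  have h1 : ((Lmat f n t)ᵀ).toSquareBlock (fun p => p.1.val) k = 1 := by
    ext ⟨p, hp⟩ ⟨q, hq⟩
    have hp' : p.1.val = k := hp
    have hq' : q.1.val = k := hq
    rw [Matrix.toSquareBlock_def]
    simp only [Matrix.of_apply, Matrix.transpose_apply]
    rw [Matrix.one_apply]
    simp only [Lmat]
    have hc : ¬(q.1.val = p.1.val + 1 ∧ q.2 = p.2) := by rintro ⟨h, -⟩; omega
    rw [if_neg hc, sub_zero]
    by_cases h : p = q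
    · subst h; simp
    · rw [if_neg (fun hh : q = p => h hh.symm), if_neg (by simpa [Subtype.ext_iff] using h)]
  rw [h1, Matrix.det_one]

theorem det_Mmat (f n : ℕ) (hf : 0 < f) (t : ℂ) (A : Matrix (Fin n) (Fin n) ℂ) :
    (Mmat f n t A).det = (1 - t ^ f • A).det := by
  rcases Nat.eq_zero_or_pos n with hn | hn
  · subst hn
    haveI : IsEmpty (Fin f × Fin 0) := ⟨fun p => p.2.elim0⟩
    rw [Matrix.det_isEmpty, Matrix.det_isEmpty]
  have hbt : (Mmat f n t A).BlockTriangular (fun p => p.1.val) := by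
    intro p q hlt
    have hlt' : q.1.val < p.1.val := hlt
    have hpf := p.1.isLt
    simp only [Mmat]
    rw [if_neg (by rintro rfl; exact lt_irrefl _ hlt'), if_neg (by intro h; omega)]
    ring
  rw [hbt.det]
  rw [Finset.prod_eq_single_of_mem (f - 1)
      (Finset.mem_image.2 ⟨(⟨f - 1, by omega⟩, ⟨0, hn⟩), Finset.mem_univ _, rfl⟩)
      ?_]
  · -- the interesting block
    have key : (Mmat f n t A).toSquareBlock (fun p => p.1.val) (f - 1) =
        ((1 : Matrix (Fin n) (Fin n) ℂ) - t ^ f • A).submatrix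
          (fun p : {p : Fin f × Fin n // p.1.val = f - 1} => p.1.2) (fun p => p.1.2) := by
      ext ⟨p, hp⟩ ⟨q, hq⟩
      have hp' : p.1.val = f - 1 := hp
      have hq' : q.1.val = f - 1 := hq
      rw [Matrix.toSquareBlock_def]
      simp only [Matrix.of_apply]
      simp only [Mmat, Matrix.submatrix_apply, Matrix.sub_apply, Matrix.one_apply,
        Matrix.smul_apply, smul_eq_mul]
      have h2 : p.1.val + 1 = f := by omega
      rw [if_pos hq', h2]
      congr 1
      have hpq : (p = q) ↔ (p.2 = q.2) := by
        constructor
        · rintro rfl; rfl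
        · intro h
          obtain ⟨p1, p2⟩ := p; obtain ⟨q1, q2⟩ := q
          simp only at hp' hq' h
          simp only [Prod.mk.injEq, Fin.ext_iff]
          exact ⟨by omega, by rw [h]⟩
      simp [hpq]
    rw [key]
    exact Matrix.det_submatrix_equiv_self
      (⟨fun p => p.1.2, fun a => ⟨(⟨f - 1, by omega⟩, a), rfl⟩,
        fun ⟨⟨p1, p2⟩, hp⟩ => by
          have hp' : p1.val = f - 1 := hp
          simp only [Subtype.mk.injEq, Prod.mk.injEq, Fin.ext_iff]
          exact ⟨by omega, trivial⟩,
        fun a => rfl⟩ : {p : Fin f × Fin n // p.1.val = f - 1} ≃ Fin n) _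
  · intro k hk hkne
    have h1 : (Mmat f n t A).toSquareBlock (fun p => p.1.val) k = 1 := by
      ext ⟨p, hp⟩ ⟨q, hq⟩
      have hp' : p.1.val = k := hp
      have hq' : q.1.val = k := hq
      have hqf := q.1.isLt
      rw [Matrix.toSquareBlock_def]
      simp only [Matrix.of_apply]
      rw [Matrix.one_apply]
      simp only [Mmat]
      have hc : ¬(q.1.val = f - 1) := by omega
      rw [if_neg hc, sub_zero]
      by_cases h : p = q
      · subst h; simp
      · rw [if_neg h, if_neg (by simpa [Subtype.ext_iff] using h)]
    rw [h1, Matrix.det_one]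

theorem toMatrix_cyclic (f : ℕ) (hf : 0 < f) {V : Type*} [AddCommGroup V] [Module ℂ V]
    [FiniteDimensional ℂ V] (φ : V →ₗ[ℂ] V) (t : ℂ) (b : Module.Basis (Fin (Module.finrank ℂ V)) ℂ V) :
    LinearMap.toMatrix
      ((Pi.basis fun _ : Fin f => b).reindex (Equiv.sigmaEquivProd (Fin f) (Fin (Module.finrank ℂ V))))
      ((Pi.basis fun _ : Fin f => b).reindex (Equiv.sigmaEquivProd (Fin f) (Fin (Module.finrank ℂ V))))
      ((1 : (Fin f → V) →ₗ[ℂ] (Fin f → V)) - t • cyclicShift f hf φ)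
      = Emat f (Module.finrank ℂ V) t (LinearMap.toMatrix b b φ) := by
  classical
  ext ⟨i, a⟩ ⟨j, c⟩
  rw [map_sub, _root_.map_smul, LinearMap.toMatrix_one]
  simp only [Matrix.sub_apply, Matrix.smul_apply, smul_eq_mul, Emat]
  congr 1
  rw [LinearMap.toMatrix_apply]
  rw [Module.Basis.repr_reindex_apply, Module.Basis.reindex_apply]
  have hsymm : (Equiv.sigmaEquivProd (Fin f) (Fin (Module.finrank ℂ V))).symm (j, c) = ⟨j, c⟩ := rfl
  have hsymm2 : (Equiv.sigmaEquivProd (Fin f) (Fin (Module.finrank ℂ V))).symm (i, a) = ⟨i, a⟩ := rfl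
  rw [hsymm, hsymm2, Pi.basis_apply, Pi.basis_repr]
  show t * (b.repr ((cyclicShift f hf φ) (Pi.single j (b c)) i)) a = _
  congr 1
  rw [cyclicShift, LinearMap.pi_apply]
  by_cases hi : i.val = 0
  · rw [if_pos hi, if_pos hi]
    simp only [LinearMap.comp_apply, LinearMap.proj_apply]
    by_cases hj : j.val = f - 1
    · have : (⟨f - 1, by omega⟩ : Fin f) = j := by simp [Fin.ext_iff]; omega
      rw [this, if_pos hj, Pi.single_eq_same, LinearMap.toMatrix_apply]
    · have : (⟨f - 1, by omega⟩ : Fin f) ≠ j := by simp [Fin.ext_iff]; omega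
      rw [Pi.single_eq_of_ne this, if_neg hj, map_zero, map_zero, Finsupp.zero_apply]
  · rw [if_neg hi, if_neg hi]
    simp only [LinearMap.proj_apply]
    by_cases hj : j.val = i.val - 1
    · have : (⟨i.val - 1, by omega⟩ : Fin f) = j := by simp [Fin.ext_iff]; omega
      rw [this, Pi.single_eq_same, Module.Basis.repr_self]
      rw [Finsupp.single_apply]
      by_cases hca : c = a
      · rw [if_pos hca, if_pos ⟨hj, hca⟩]
      · rw [if_neg hca, if_neg (by rintro ⟨-, h⟩; exact hca h)]
    · have : (⟨i.val - 1, by omega⟩ : Fin f) ≠ j := by simp [Fin.ext_iff]; omega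
      rw [Pi.single_eq_of_ne this, map_zero, Finsupp.zero_apply,
        if_neg (by rintro ⟨h, -⟩; exact hj h)]

/-- Block-cyclic determinant identity: for `W = V^{⊕f}` and
`ψ(v₁, ..., v_f) = (φ(v_f), v₁, ..., v_{f−1})`, one has
`det(Id_W − t·ψ) = det(Id_V − t^f·φ)` for every `t ∈ ℂ`. -/
theorem stmt_13 (f : ℕ) (hf : 0 < f) (V : Type*) [AddCommGroup V] [Module ℂ V]
    [FiniteDimensional ℂ V] (φ : V →ₗ[ℂ] V) (hφ : Function.Bijective φ) (t : ℂ) :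
    LinearMap.det ((1 : (Fin f → V) →ₗ[ℂ] (Fin f → V)) - t • cyclicShift f hf φ)
      = LinearMap.det ((1 : V →ₗ[ℂ] V) - t ^ f • φ) := by
  classical
  set n := Module.finrank ℂ V
  let b : Module.Basis (Fin n) ℂ V := Module.finBasis ℂ V
  let B := (Pi.basis fun _ : Fin f => b).reindex (Equiv.sigmaEquivProd (Fin f) (Fin n))
  rw [← LinearMap.det_toMatrix B, ← LinearMap.det_toMatrix b]
  rw [toMatrix_cyclic f hf φ t b]
  rw [← L_mul_M, Matrix.det_mul, det_Lmat, one_mul, det_Mmat f n hf]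
  congr 1
  rw [map_sub, _root_.map_smul, LinearMap.toMatrix_one]
end
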